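/- There is no finite non-abelian group G satisfying m(G) < k(G) - 1. -/

import Mathlib

/-- `kClasses G` is the number of conjugacy classes of `G`. -/
noncomputable def kClasses (G : Type*) [Group G] : ℕ := Nat.card (ConjClasses G)

/-- `mVal G` is the least positive integer `n` such that the union of any `n` distinct
non-trivial conjugacy classes of `G` together with the identity of `G` is a subgroup of `G`. -/
noncomputable def mVal (G : Type*) [Group G] : ℕ :=
  sInf {n : ℕ | 0 < n ∧ ∀ S : Finset (ConjClasses G),
    S.card = n → (∀ c ∈ S, c ≠ ConjClasses.mk (1 : G)) →
    ∃ H : Subgroup G, (H : Set G) = insert (1 : G) (⋃ c ∈ S, c.carrier)}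


theorem stmt_11 :
    ∀ (G : Type) [Group G] [Finite G],
      (¬ ∀ a b : G, a * b = b * a) → ¬ (mVal G < kClasses G - 1) := by
  intro G _ _ hna hlt
  classical
  have : Fintype G := Fintype.ofFinite G
  have : Fintype (ConjClasses G) := Fintype.ofFinite _
  set k := kClasses G with hk
  have hkcard : k = Fintype.card (ConjClasses G) := Nat.card_eq_fintype_card
  have hmk1 : ∀ z : G, ConjClasses.mk z = ConjClasses.mk (1 : G) ↔ z = 1 := by
    intro z
    rw [ConjClasses.mk_eq_mk_iff_isConj, isConj_one_left]
  push_neg at hna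
  obtain ⟨a, b, hab⟩ := hna
  have ha1 : a ≠ 1 := by rintro rfl; simp at hab
  have hb1 : b ≠ 1 := by rintro rfl; simp at hab
  have ha1' : ConjClasses.mk a ≠ ConjClasses.mk (1 : G) := by rw [Ne, hmk1]; exact ha1
  have h2k : 2 ≤ k := by
    rw [hkcard]
    have : Nontrivial (ConjClasses G) := ⟨⟨ConjClasses.mk a, ConjClasses.mk 1, ha1'⟩⟩
    exact Fintype.one_lt_card
  set M : Set ℕ := {n : ℕ | 0 < n ∧ ∀ S : Finset (ConjClasses G),
    S.card = n → (∀ c ∈ S, c ≠ ConjClasses.mk (1 : G)) →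
    ∃ H : Subgroup G, (H : Set G) = insert (1 : G) (⋃ c ∈ S, c.carrier)} with hM
  have hlt' : sInf M < k - 1 := hlt
  -- `k - 1` lies in `M`
  have hset : (k - 1) ∈ M := by
    constructor
    · omega
    · intro S hScard hS1
      have hsubS : S ⊆ Finset.univ \ {ConjClasses.mk (1 : G)} := by
        intro c hc
        simp only [Finset.mem_sdiff, Finset.mem_univ, Finset.mem_singleton, true_and]
        exact hS1 c hc
      have hcard2 : (Finset.univ \ {ConjClasses.mk (1 : G)}).card = k - 1 := by
        rw [Finset.card_sdiff_of_subset (Finset.subset_univ _), Finset.card_singleton,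
          Finset.card_univ, ← hkcard]
      have hSeq : S = Finset.univ \ {ConjClasses.mk (1 : G)} :=
        Finset.eq_of_subset_of_card_le hsubS (le_of_eq (hcard2.trans hScard.symm))
      refine ⟨⊤, ?_⟩
      ext z
      simp only [Subgroup.coe_top, Set.mem_univ, true_iff, Set.mem_insert_iff,
        Set.mem_iUnion, exists_prop]
      by_cases hz : z = 1
      · exact Or.inl hz
      · refine Or.inr ⟨ConjClasses.mk z, ?_, ConjClasses.mem_carrier_iff_mk_eq.2 rfl⟩
        rw [hSeq]
        simp only [Finset.mem_sdiff, Finset.mem_univ, Finset.mem_singleton, true_and]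
        rw [hmk1]
        exact hz
  obtain ⟨hpos, hP⟩ := Nat.sInf_mem (⟨k - 1, hset⟩ : M.Nonempty)
  -- auxiliary subgroup containing class `c` and avoiding class `d`
  have hsub : ∀ c d : ConjClasses G, c ≠ ConjClasses.mk (1 : G) →
      d ≠ ConjClasses.mk (1 : G) → c ≠ d →
      ∃ H : Subgroup G, (∀ z : G, ConjClasses.mk z = c → z ∈ H) ∧
        (∀ z : G, z ∈ H → z = 1 ∨ ConjClasses.mk z ≠ d) := by
    intro c d hc1 hd1 hcd
    have hcT : c ∈ Finset.univ \ ({ConjClasses.mk (1 : G), d} : Finset (ConjClasses G)) := by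
      simp only [Finset.mem_sdiff, Finset.mem_univ, Finset.mem_insert, Finset.mem_singleton,
        true_and, not_or]
      exact ⟨hc1, hcd⟩
    have hTcard : (Finset.univ \ ({ConjClasses.mk (1 : G), d} :
        Finset (ConjClasses G))).card = k - 2 := by
      rw [Finset.card_sdiff_of_subset (Finset.subset_univ _), Finset.card_pair (Ne.symm hd1),
        Finset.card_univ, ← hkcard]
    obtain ⟨S, hcS, hST, hScard⟩ := Finset.exists_subsuperset_card_eq (n := sInf M)
      (Finset.singleton_subset_iff.2 hcT) (by rw [Finset.card_singleton]; exact hpos) (by rw [hTcard]; omega)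
    obtain ⟨H, hH⟩ := hP S hScard (fun e he => by
      have h := hST he
      simp only [Finset.mem_sdiff, Finset.mem_univ, Finset.mem_insert, Finset.mem_singleton,
        true_and, not_or] at h
      exact h.1)
    refine ⟨H, ?_, ?_⟩
    · intro z hz
      have hz' : z ∈ (H : Set G) := by
        rw [hH]
        simp only [Set.mem_insert_iff, Set.mem_iUnion, exists_prop]
        exact Or.inr ⟨c, hcS (Finset.mem_singleton_self c),
          ConjClasses.mem_carrier_iff_mk_eq.2 hz⟩
      exact hz'
    · intro z hz
      have hz' : z ∈ (H : Set G) := hz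
      rw [hH] at hz'
      rcases Set.mem_insert_iff.1 hz' with h1 | h2
      · exact Or.inl h1
      · right
        simp only [Set.mem_iUnion, exists_prop] at h2
        obtain ⟨e, heS, hze⟩ := h2
        have hze' : ConjClasses.mk z = e := ConjClasses.mem_carrier_iff_mk_eq.1 hze
        rw [hze']
        have h := hST heS
        simp only [Finset.mem_sdiff, Finset.mem_univ, Finset.mem_insert, Finset.mem_singleton,
          true_and, not_or] at h
        exact h.2
  -- inverse of a nontrivial element stays in its class
  have hinv : ∀ x : G, x ≠ 1 → ConjClasses.mk (x⁻¹) = ConjClasses.mk x := by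
    intro x hx
    by_contra hne
    have hx1 : ConjClasses.mk x ≠ ConjClasses.mk (1 : G) := by rw [Ne, hmk1]; exact hx
    have hxi : x⁻¹ ≠ 1 := inv_ne_one.2 hx
    have hxi1 : ConjClasses.mk x⁻¹ ≠ ConjClasses.mk (1 : G) := by rw [Ne, hmk1]; exact hxi
    obtain ⟨H, hmemH, havoid⟩ :=
      hsub (ConjClasses.mk x) (ConjClasses.mk x⁻¹) hx1 hxi1 (Ne.symm hne)
    rcases havoid _ (inv_mem (hmemH x rfl)) with h | h
    · exact hxi h
    · exact h rfl
  -- product of two elements of a class stays in the class (or is 1)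
  have hkey : ∀ (c : ConjClasses G), c ≠ ConjClasses.mk (1 : G) → ∀ x y : G,
      ConjClasses.mk x = c → ConjClasses.mk y = c →
      x * y = 1 ∨ ConjClasses.mk (x * y) = c := by
    intro c hc x y hx hy
    by_cases h1 : x * y = 1
    · exact Or.inl h1
    right
    by_contra hne
    have hd1 : ConjClasses.mk (x * y) ≠ ConjClasses.mk (1 : G) := by rw [Ne, hmk1]; exact h1
    obtain ⟨H, hmemH, havoid⟩ := hsub c (ConjClasses.mk (x * y)) hc hd1 (Ne.symm hne)
    rcases havoid _ (mul_mem (hmemH x hx) (hmemH y hy)) with h | h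
    · exact h1 h
    · exact h rfl
  -- elements of distinct nontrivial classes commute
  have hA : ∀ x y : G, x ≠ 1 → y ≠ 1 → ConjClasses.mk x ≠ ConjClasses.mk y →
      x * y = y * x := by
    intro x y hx hy hxy
    have hcx : ConjClasses.mk x ≠ ConjClasses.mk (1 : G) := by rw [Ne, hmk1]; exact hx
    have hcy : ConjClasses.mk y ≠ ConjClasses.mk (1 : G) := by rw [Ne, hmk1]; exact hy
    have hconj1 : ConjClasses.mk (y⁻¹ * x * y) = ConjClasses.mk x :=
      ConjClasses.mk_eq_mk_iff_isConj.2 ((isConj_iff.2 ⟨y⁻¹, by group⟩).symm)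
    have hconj2 : ConjClasses.mk (x⁻¹ * y⁻¹ * x) = ConjClasses.mk y⁻¹ :=
      ConjClasses.mk_eq_mk_iff_isConj.2 ((isConj_iff.2 ⟨x⁻¹, by group⟩).symm)
    have h1 := hkey (ConjClasses.mk x) hcx x⁻¹ (y⁻¹ * x * y) (hinv x hx) hconj1
    have heq : x⁻¹ * (y⁻¹ * x * y) = x⁻¹ * y⁻¹ * x * y := by group
    rw [heq] at h1
    have h2 := hkey (ConjClasses.mk y) hcy (x⁻¹ * y⁻¹ * x) y
      (by rw [hconj2, hinv y hy]) rfl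
    have ht1 : x⁻¹ * y⁻¹ * x * y = 1 := by
      rcases h1 with h1 | h1
      · exact h1
      · rcases h2 with h2 | h2
        · exact h2
        · exact absurd (h1.symm.trans h2) hxy
    have h3 : y⁻¹ * (x * y) = x := by
      have h4 := congrArg (fun z => x * z) ht1
      simpa [mul_assoc] using h4
    have h5 := congrArg (fun z => y * z) h3
    simpa [mul_assoc] using h5
  -- Now prove `a * b = b * a`, contradiction
  apply hab
  by_cases hc : ConjClasses.mk a = ConjClasses.mk b
  · -- same class: use a third class
    have hb1' : ConjClasses.mk b ≠ ConjClasses.mk (1 : G) := by rw [Ne, hmk1]; exact hb1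
    have hT : (Finset.univ \ ({ConjClasses.mk (1 : G), ConjClasses.mk a} :
        Finset (ConjClasses G))).Nonempty := by
      rw [← Finset.card_pos, Finset.card_sdiff_of_subset (Finset.subset_univ _),
        Finset.card_pair (Ne.symm ha1'), Finset.card_univ, ← hkcard]
      omega
    obtain ⟨d, hd⟩ := hT
    simp only [Finset.mem_sdiff, Finset.mem_univ, Finset.mem_insert, Finset.mem_singleton,
      true_and, not_or] at hd
    obtain ⟨hd1, hda⟩ := hd
    obtain ⟨w, hw⟩ := ConjClasses.exists_rep d
    have hw1 : w ≠ 1 := by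
      rintro rfl
      exact hd1 hw.symm
    have hwa : ConjClasses.mk w ≠ ConjClasses.mk a := by rw [hw]; exact hda
    have hu1 : a * w ≠ 1 := by
      intro h
      have h9 := congrArg (fun z => a⁻¹ * z) h
      simp only [mul_one] at h9
      have hwinv : w = a⁻¹ := by simpa [mul_assoc] using h9
      apply hda
      rw [← hw, hwinv, hinv a ha1]
    have hua : ConjClasses.mk (a * w) ≠ ConjClasses.mk a := by
      intro h
      have h6 := hkey (ConjClasses.mk a) ha1' a⁻¹ (a * w) (hinv a ha1) h
      have h7 : a⁻¹ * (a * w) = w := by group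
      rw [h7] at h6
      rcases h6 with h6 | h6
      · exact hw1 h6
      · exact hwa h6
    have hdb : ConjClasses.mk w ≠ ConjClasses.mk b := by rw [hw, ← hc]; exact hda
    have c1 : Commute b w := (show Commute w b from hA w b hw1 hb1 hdb).symm
    have hub : ConjClasses.mk (a * w) ≠ ConjClasses.mk b := by rw [← hc]; exact hua
    have c2 : Commute b (a * w) :=
      (show Commute (a * w) b from hA (a * w) b hu1 hb1 hub).symm
    have c3 : Commute b (a * w * w⁻¹) := c2.mul_right c1.inv_right
    have h8 : a * w * w⁻¹ = a := mul_inv_cancel_right a w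
    rw [h8] at c3
    exact c3.symm
  · exact hA a b ha1 hb1 hc
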